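/- For f, g ∈ C_c(ℝ × 𝕋), with ⟨f,g⟩_D(x,y,p) = Σ_{k∈ℤ} e(ckp(y−pν)) f(x+k,y) conj(g(x−2pμ+k, y−2pν)) and ⟨g,f⟩_E(x,y,k) = Σ_{p∈ℤ} e(−ckp(y−pν)) conj(g(x−2pμ, y−2pν)) f(x−2pμ+k, y−2pν), the traces agree: ∫_{[0,1]²} ⟨f,g⟩_D(x,y,0) dx dy = ∫₀^{2μ} ∫₀^1 ⟨g,f⟩_E(x,y,0) dx dy, assuming μ > 0. -/

import Mathlib

open Complex MeasureTheory
open intervalIntegral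

lemma sum_adjacent (G : ℝ → ℂ) (hG : Continuous G) (T : ℝ) (m : ℤ) :
    ∀ n : ℤ, m ≤ n →
      ∑ k ∈ Finset.Icc m n, ∫ x in ((k : ℝ) * T)..(((k : ℝ) + 1) * T), G x
        = ∫ x in ((m : ℝ) * T)..(((n : ℝ) + 1) * T), G x := by
  refine Int.le_induction ?_ ?_
  · simp
  · intro n hn ih
    have hins : Finset.Icc m (n + 1) = insert (n + 1) (Finset.Icc m n) := by
      ext k; simp only [Finset.mem_Icc, Finset.mem_insert]; omega
    rw [hins, Finset.sum_insert (by simp), ih, add_comm]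
    push_cast
    rw [integral_add_adjacent_intervals (hG.intervalIntegrable _ _) (hG.intervalIntegrable _ _)]

lemma tails (F : ℝ → ℂ) (hF : Continuous F) (S a b : ℝ) (hS : 0 ≤ S)
    (hvan : ∀ x, S ≤ |x| → F x = 0) (ha : a ≤ -S) (hb : S ≤ b) :
    ∫ x in a..b, F x = ∫ x in (-S)..S, F x := by
  have h1 : (∫ x in a..(-S), F x) = 0 := by
    rw [intervalIntegral.integral_congr (g := fun _ => 0) ?_, intervalIntegral.integral_zero]
    intro x hx
    rw [Set.uIcc_of_le ha] at hx
    exact hvan x (by rw [_root_.abs_of_nonpos (hx.2.trans (by linarith))]; linarith [hx.2])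
  have h2 : (∫ x in S..b, F x) = 0 := by
    rw [intervalIntegral.integral_congr (g := fun _ => 0) ?_, intervalIntegral.integral_zero]
    intro x hx
    rw [Set.uIcc_of_le hb] at hx
    exact hvan x (by rw [_root_.abs_of_nonneg (hS.trans hx.1)]; exact hx.1)
  rw [← integral_add_adjacent_intervals (a := a) (b := -S) (c := b)
      (hF.intervalIntegrable _ _) (hF.intervalIntegrable _ _), h1, zero_add,
    ← integral_add_adjacent_intervals (a := -S) (b := S) (c := b)
      (hF.intervalIntegrable _ _) (hF.intervalIntegrable _ _), h2, add_zero]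

/-- `e t = exp(2πit)`. -/
noncomputable def e (t : ℝ) : ℂ := Complex.exp (2 * Real.pi * Complex.I * t)

/-- The D-valued inner product ⟨f,g⟩_D. -/
noncomputable def innD (c : ℤ) (μ ν : ℝ) (f g : ℝ → ℝ → ℂ) : ℝ → ℝ → ℤ → ℂ :=
  fun x y p => ∑' k : ℤ, e ((c : ℝ) * k * p * (y - p * ν)) * f (x + k) y *
    (starRingEnd ℂ) (g (x - 2 * p * μ + k) (y - 2 * p * ν))

/-- The E-valued inner product ⟨f,g⟩_E. -/
noncomputable def innE (c : ℤ) (μ ν : ℝ) (f g : ℝ → ℝ → ℂ) : ℝ → ℝ → ℤ → ℂ :=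
  fun x y k => ∑' p : ℤ, e (-((c : ℝ) * k * p * (y - p * ν))) *
    (starRingEnd ℂ) (f (x - 2 * p * μ) (y - 2 * p * ν)) * g (x - 2 * p * μ + k) (y - 2 * p * ν)

/-- τ_D(⟨f,g⟩_D) = τ_E(⟨g,f⟩_E). -/
theorem stmt11 (c : ℤ) (hc : 1 ≤ c) (μ ν : ℝ) (hμ : 0 < μ) (f g : ℝ → ℝ → ℂ)
    (hfc : Continuous fun q : ℝ × ℝ => f q.1 q.2)
    (hgc : Continuous fun q : ℝ × ℝ => g q.1 q.2)
    (hfp : ∀ x y, f x (y + 1) = f x y) (hgp : ∀ x y, g x (y + 1) = g x y)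
    (hfs : ∃ R : ℝ, ∀ x y, R < |x| → f x y = 0)
    (hgs : ∃ R : ℝ, ∀ x y, R < |x| → g x y = 0) :
    (∫ x in (0 : ℝ)..1, ∫ y in (0 : ℝ)..1, innD c μ ν f g x y 0) =
      ∫ x in (0 : ℝ)..(2 * μ), ∫ y in (0 : ℝ)..1, innE c μ ν g f x y 0 := by
  obtain ⟨Rf, hRf⟩ := hfs
  obtain ⟨Rg, hRg⟩ := hgs
  set R : ℝ := |Rf| + |Rg| with hRdef
  have hR0 : 0 ≤ R := by positivity
  have hRfR : Rf ≤ R := by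
    have := le_abs_self Rf; have := abs_nonneg Rg; linarith
  -- the pointwise product
  set h : ℝ → ℝ → ℂ := fun x y => f x y * (starRingEnd ℂ) (g x y) with hh
  have hhc : Continuous fun q : ℝ × ℝ => h q.1 q.2 := hfc.mul (continuous_star.comp hgc)
  have hhvan : ∀ x y, R < |x| → h x y = 0 := by
    intro x y hx
    simp only [hh, hRf x y (lt_of_le_of_lt hRfR hx), zero_mul]
  have hhper : ∀ x, Function.Periodic (h x) 1 := by
    intro x y; simp only [hh, hfp, hgp]
  set F : ℝ → ℂ := fun x => ∫ y in (0:ℝ)..1, h x y with hF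
  have hFc : Continuous F := by
    apply continuous_parametric_intervalIntegral_of_continuous' (f := h) _ 0 1
    exact hhc
  have hFvan : ∀ x, R + 1 ≤ |x| → F x = 0 := by
    intro x hx
    have hx' : R < |x| := by linarith
    simp only [hF]
    rw [intervalIntegral.integral_congr (g := fun _ => (0:ℂ)) (fun y _ => hhvan x y hx')]
    simp
  -- reduce innD, innE at the 0 fiber
  have hD : ∀ x y, innD c μ ν f g x y 0 = ∑' k : ℤ, h (x + k) y := by
    intro x y
    unfold innD
    apply tsum_congr; intro k
    norm_num [e, hh]
  have hE : ∀ x y, innE c μ ν g f x y 0 = ∑' p : ℤ, h (x - 2*p*μ) (y - 2*p*ν) := by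
    intro x y
    unfold innE
    apply tsum_congr; intro p
    norm_num [e, hh, mul_comm]
  -- index bounds
  set N : ℤ := ⌈R⌉ + 2 with hNdef
  have hN1 : R + 1 ≤ (N : ℝ) := by
    have := Int.le_ceil R; push_cast [hNdef]; linarith
  set M : ℤ := ⌈(R+1)/(2*μ)⌉ + 1 with hMdef
  have hM1 : R + 1 ≤ 2 * (M : ℝ) * μ := by
    have h1 := Int.le_ceil ((R+1)/(2*μ))
    have h2 : (R+1)/(2*μ) * (2*μ) = R + 1 := by field_simp
    push_cast [hMdef]
    nlinarith [Int.le_ceil ((R+1)/(2*μ)), hμ]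
  -- LHS
  have keyL : (∫ x in (0 : ℝ)..1, ∫ y in (0 : ℝ)..1, innD c μ ν f g x y 0)
      = ∫ x in (-(R+1))..(R+1), F x := by
    rw [intervalIntegral.integral_congr
        (g := fun x => ∑ k ∈ Finset.Icc (-N) N, F (x + (k:ℝ))) ?_]
    · rw [intervalIntegral.integral_finset_sum (f := fun (k : ℤ) x => F (x + (k:ℝ)))
        (fun k _ => by exact (hFc.comp (continuous_add_right (k:ℝ))).intervalIntegrable _ _)]
      have hterm : ∀ k : ℤ, (∫ x in (0:ℝ)..1, F (x + (k:ℝ)))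
          = ∫ x in ((k:ℝ) * 1)..(((k:ℝ) + 1) * 1), F x := by
        intro k
        rw [integral_comp_add_right]
        norm_num [add_comm]
      simp_rw [hterm]
      rw [sum_adjacent F hFc 1 (-N) N (by have := Int.ceil_nonneg hR0; omega)]
      rw [tails F hFc (R+1) _ _ (by linarith) hFvan (by push_cast; linarith)
        (by push_cast; linarith)]
    · intro x hx
      rw [Set.uIcc_of_le (by norm_num : (0:ℝ) ≤ 1)] at hx
      calc (∫ y in (0:ℝ)..1, innD c μ ν f g x y 0)
          = ∫ y in (0:ℝ)..1, ∑ k ∈ Finset.Icc (-N) N, h (x + (k:ℝ)) y := by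
            apply intervalIntegral.integral_congr
            intro y _
            refine (hD x y).trans (tsum_eq_sum ?_)
            intro k hk
            apply hhvan
            simp only [Finset.mem_Icc, not_and_or, not_le] at hk
            rcases hk with hk | hk
            · have : (k:ℝ) ≤ -(N:ℝ) - 1 := by exact_mod_cast (by omega : k ≤ -N - 1)
              rw [abs_of_nonpos (by linarith [hx.2])]
              linarith [hx.2]
            · have : (N:ℝ) + 1 ≤ (k:ℝ) := by exact_mod_cast (by omega : N + 1 ≤ k)
              rw [_root_.abs_of_nonneg (by linarith [hx.1])]
              linarith [hx.1]
        _ = ∑ k ∈ Finset.Icc (-N) N, F (x + (k:ℝ)) := by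
            rw [intervalIntegral.integral_finset_sum (f := fun (k : ℤ) y => h (x + (k:ℝ)) y)
              (fun k _ => by exact (hhc.comp (Continuous.prodMk_right (x + (k:ℝ)))).intervalIntegrable _ _)]
  -- RHS
  have keyR : (∫ x in (0 : ℝ)..(2*μ), ∫ y in (0 : ℝ)..1, innE c μ ν g f x y 0)
      = ∫ x in (-(R+1))..(R+1), F x := by
    rw [intervalIntegral.integral_congr
        (g := fun x => ∑ p ∈ Finset.Icc (-M) M, F (x - 2*(p:ℝ)*μ)) ?_]
    · rw [intervalIntegral.integral_finset_sum (f := fun (p : ℤ) x => F (x - 2*(p:ℝ)*μ))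
        (fun p _ => by exact (hFc.comp (continuous_sub_right (2*(p:ℝ)*μ))).intervalIntegrable _ _)]
      have hterm : ∀ p : ℤ, (∫ x in (0:ℝ)..(2*μ), F (x - 2*(p:ℝ)*μ))
          = ∫ x in (((-p : ℤ):ℝ) * (2*μ))..((((-p : ℤ):ℝ) + 1) * (2*μ)), F x := by
        intro p
        rw [integral_comp_sub_right]
        have e1 : (0:ℝ) - 2*(p:ℝ)*μ = ((-p : ℤ):ℝ) * (2*μ) := by push_cast; ring
        have e2 : (2*μ) - 2*(p:ℝ)*μ = (((-p : ℤ):ℝ) + 1) * (2*μ) := by push_cast; ring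
        rw [e1, e2]
      simp_rw [hterm]
      rw [Finset.sum_equiv (Equiv.neg ℤ)
        (t := Finset.Icc (-M) M)
        (g := fun q : ℤ => ∫ x in ((q:ℝ) * (2*μ))..(((q:ℝ) + 1) * (2*μ)), F x)
        (by intro i; simp only [Finset.mem_Icc, Equiv.neg_apply]; omega)
        (by intro i _; simp)]
      rw [sum_adjacent F hFc (2*μ) (-M) M (by have : (0:ℤ) ≤ ⌈(R + 1) / (2 * μ)⌉ := Int.ceil_nonneg (by positivity); omega)]
      rw [tails F hFc (R+1) _ _ (by linarith) hFvan (by push_cast; nlinarith)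
        (by push_cast; nlinarith)]
    · intro x hx
      rw [Set.uIcc_of_le (by linarith : (0:ℝ) ≤ 2*μ)] at hx
      calc (∫ y in (0:ℝ)..1, innE c μ ν g f x y 0)
          = ∫ y in (0:ℝ)..1, ∑ p ∈ Finset.Icc (-M) M, h (x - 2*(p:ℝ)*μ) (y - 2*(p:ℝ)*ν) := by
            apply intervalIntegral.integral_congr
            intro y _
            refine (hE x y).trans (tsum_eq_sum ?_)
            intro p hp
            apply hhvan
            simp only [Finset.mem_Icc, not_and_or, not_le] at hp
            rcases hp with hp | hp
            · have hpr : (p:ℝ) ≤ -(M:ℝ) - 1 := by exact_mod_cast (by omega : p ≤ -M - 1)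
              rw [_root_.abs_of_nonneg (by nlinarith [hx.1])]
              nlinarith [hx.1]
            · have hpr : (M:ℝ) + 1 ≤ (p:ℝ) := by exact_mod_cast (by omega : M + 1 ≤ p)
              rw [abs_of_nonpos (by nlinarith [hx.2])]
              nlinarith [hx.2]
        _ = ∑ p ∈ Finset.Icc (-M) M, F (x - 2*(p:ℝ)*μ) := by
            rw [intervalIntegral.integral_finset_sum (f := fun (p : ℤ) y => h (x - 2*(p:ℝ)*μ) (y - 2*(p:ℝ)*ν))
              (fun p _ => by exact (hhc.comp (continuous_const.prodMk (continuous_sub_right (2*(p:ℝ)*ν)))).intervalIntegrable _ _)]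
            apply Finset.sum_congr rfl
            intro p _
            rw [integral_comp_sub_right (fun y => h (x - 2*(p:ℝ)*μ) y) (2*(p:ℝ)*ν)]
            have e1 : (1:ℝ) - 2*(p:ℝ)*ν = ((0:ℝ) - 2*(p:ℝ)*ν) + 1 := by ring
            rw [e1, hhper (x - 2*(p:ℝ)*μ) |>.intervalIntegral_add_eq (0 - 2*(p:ℝ)*ν) 0]
            norm_num
            rfl
  rw [keyL, keyR]
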